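/- Let x, y, z ∈ (0,∞)^n and s ∈ [-1,1]^n. If |x − y| > 2|x − z| (Euclidean norm), then (1/4)·q(x, y, s) ≤ q(z, y, s) ≤ 4·q(x, y, s), where q(x,y,s) = |x|² + |y|² + 2·Σ_{j=1}^n x_j y_j s_j. -/

import Mathlib

open scoped BigOperators
open scoped RealInnerProductSpace

/-- `q(x,y,s) = |x|² + |y|² + 2 Σ x_j y_j s_j`. -/
noncomputable def qform {n : ℕ} (x y : EuclideanSpace ℝ (Fin n)) (s : Fin n → ℝ) : ℝ :=
  ‖x‖ ^ 2 + ‖y‖ ^ 2 + 2 * ∑ j, x j * y j * s j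

lemma qform_aux (a b : ℝ) (ha0 : 0 ≤ a) (hb0 : 0 ≤ b)
    (k1 : -(a / 2 * (a + b)) ≤ b ^ 2 - a ^ 2) (k2 : b ^ 2 - a ^ 2 ≤ a / 2 * (a + b)) :
    1 / 4 * a ^ 2 ≤ b ^ 2 ∧ b ^ 2 ≤ 4 * a ^ 2 := by
  constructor
  · nlinarith [sq_nonneg (a - 2 * b)]
  · nlinarith [sq_nonneg (a - b)]

theorem stmt1 {n : ℕ} (x y z : EuclideanSpace ℝ (Fin n)) (s : Fin n → ℝ)
    (hx : ∀ j, 0 < x j) (hy : ∀ j, 0 < y j) (hz : ∀ j, 0 < z j)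
    (hs : ∀ j, s j ∈ Set.Icc (-1 : ℝ) 1)
    (h : ‖x - y‖ > 2 * ‖x - z‖) :
    (1 / 4) * qform x y s ≤ qform z y s ∧ qform z y s ≤ 4 * qform x y s := by
  classical
  have hs1 : ∀ j, s j ^ 2 ≤ 1 := fun j => by
    obtain ⟨h1, h2⟩ := hs j; nlinarith
  have hnorm : ∀ a : EuclideanSpace ℝ (Fin n), ‖a‖ ^ 2 = ∑ j, a j ^ 2 := fun a => by
    rw [EuclideanSpace.norm_eq, Real.sq_sqrt (by positivity)]
    simp [sq_abs]
  set u : EuclideanSpace ℝ (Fin n) := WithLp.toLp 2 (fun j => x j + y j * s j) with hu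
  set v : EuclideanSpace ℝ (Fin n) := WithLp.toLp 2 (fun j => z j + y j * s j) with hv
  have hqx : qform x y s = ∑ j, (x j ^ 2 + y j ^ 2 + 2 * (x j * y j * s j)) := by
    simp [qform, hnorm, Finset.sum_add_distrib, Finset.mul_sum]
  have hqz : qform z y s = ∑ j, (z j ^ 2 + y j ^ 2 + 2 * (z j * y j * s j)) := by
    simp [qform, hnorm, Finset.sum_add_distrib, Finset.mul_sum]
  have hux : ‖u‖ ^ 2 ≤ qform x y s := by
    rw [hnorm, hqx]
    apply Finset.sum_le_sum
    intro j _
    have := hs1 j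
    simp only [hu]
    nlinarith [sq_nonneg (y j)]
  have huz : ‖v‖ ^ 2 ≤ qform z y s := by
    rw [hnorm, hqz]
    apply Finset.sum_le_sum
    intro j _
    have := hs1 j
    simp only [hv]
    nlinarith [sq_nonneg (y j)]
  have hxy : ‖x - y‖ ^ 2 ≤ qform x y s := by
    rw [hnorm, hqx]
    apply Finset.sum_le_sum
    intro j _
    have h1 := (hs j).1
    have := mul_pos (hx j) (hy j)
    simp only [PiLp.sub_apply]
    nlinarith
  have hzy : ‖z - y‖ ^ 2 ≤ qform z y s := by
    rw [hnorm, hqz]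
    apply Finset.sum_le_sum
    intro j _
    have h1 := (hs j).1
    have := mul_pos (hz j) (hy j)
    simp only [PiLp.sub_apply]
    nlinarith
  have hqx0 : 0 ≤ qform x y s := le_trans (by positivity) hxy
  have hqz0 : 0 ≤ qform z y s := le_trans (by positivity) hzy
  have hdiff : qform z y s - qform x y s = ⟪(z - x : EuclideanSpace ℝ (Fin n)), u + v⟫ := by
    rw [hqx, hqz, ← Finset.sum_sub_distrib, PiLp.inner_apply]
    apply Finset.sum_congr rfl
    intro j _
    simp only [PiLp.sub_apply, PiLp.add_apply, hu, hv, RCLike.inner_apply, conj_trivial]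
    ring
  have hcs : |qform z y s - qform x y s| ≤ ‖z - x‖ * (‖u‖ + ‖v‖) := by
    rw [hdiff]
    have h1 := abs_real_inner_le_norm (z - x : EuclideanSpace ℝ (Fin n)) (u + v)
    have h2 : ‖u + v‖ ≤ ‖u‖ + ‖v‖ := norm_add_le _ _
    nlinarith [norm_nonneg (z - x : EuclideanSpace ℝ (Fin n))]
  set a := Real.sqrt (qform x y s) with ha
  set b := Real.sqrt (qform z y s) with hb
  have ha2 : a ^ 2 = qform x y s := Real.sq_sqrt hqx0
  have hb2 : b ^ 2 = qform z y s := Real.sq_sqrt hqz0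
  have ha0 : 0 ≤ a := Real.sqrt_nonneg _
  have hb0 : 0 ≤ b := Real.sqrt_nonneg _
  have hua : ‖u‖ ≤ a := by
    rw [ha]
    rw [show ‖u‖ = Real.sqrt (‖u‖ ^ 2) from (Real.sqrt_sq (norm_nonneg _)).symm]
    exact Real.sqrt_le_sqrt hux
  have hvb : ‖v‖ ≤ b := by
    rw [hb]
    rw [show ‖v‖ = Real.sqrt (‖v‖ ^ 2) from (Real.sqrt_sq (norm_nonneg _)).symm]
    exact Real.sqrt_le_sqrt huz
  have hxya : ‖x - y‖ ≤ a := by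
    rw [ha]
    rw [show ‖x - y‖ = Real.sqrt (‖x - y‖ ^ 2) from (Real.sqrt_sq (norm_nonneg _)).symm]
    exact Real.sqrt_le_sqrt hxy
  have hzx : ‖z - x‖ ≤ a / 2 := by
    rw [norm_sub_rev]
    nlinarith [norm_nonneg (x - z)]
  have key : |qform z y s - qform x y s| ≤ a / 2 * (a + b) := by
    calc |qform z y s - qform x y s| ≤ ‖z - x‖ * (‖u‖ + ‖v‖) := hcs
      _ ≤ a / 2 * (a + b) := by
          apply mul_le_mul hzx (add_le_add hua hvb) (by positivity) (by linarith)
  rw [abs_le] at key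
  obtain ⟨k1, k2⟩ := key
  rw [← ha2, ← hb2] at k1 k2 ⊢
  exact qform_aux a b ha0 hb0 (by linarith) (by linarith)
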